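/- Define Φ : ℝ² → ℝ² in polar-type form by Φ(x) = S_x · x where S_x is the rotation matrix by angle f(|x|), i.e., Φ(x) = (cos f(|x|) x₁ + sin f(|x|) x₂, −sin f(|x|) x₁ + cos f(|x|) x₂), for a C¹ function f : [0,∞) → ℝ. If t|f'(t)| ≤ cε for all t ≥ 0 (for a suitable absolute constant c > 0 and 0 < ε < 1), then Φ is an ε-distorted diffeomorphism: (1−ε)I ≤ (Φ'(x))ᵀΦ'(x) ≤ (1+ε)I for all x. -/

import Mathlib

open Matrix MeasureTheory

/-- Hilbert–Schmidt norm of a D×D real matrix. -/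
noncomputable def hsNorm {D : ℕ} (M : Matrix (Fin D) (Fin D) ℝ) : ℝ :=
  Real.sqrt (∑ i, ∑ j, (M i j) ^ 2)

/-- Jacobian matrix of a map `ℝ^D → ℝ^D`: entry `(i,j)` is `∂Φ_i/∂x_j`. -/
noncomputable def jacobian {D : ℕ} (Φ : (Fin D → ℝ) → (Fin D → ℝ)) (x : Fin D → ℝ) :
    Matrix (Fin D) (Fin D) ℝ :=
  fun i j => fderiv ℝ Φ x (Pi.single j 1) i

/-- `Φ` is an ε-distorted diffeomorphism:
a bijective differentiable map with `(1-ε)I ≤ (Φ')ᵀ Φ' ≤ (1+ε)I` as quadratic forms. -/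
structure EpsDistorted {D : ℕ} (Φ : (Fin D → ℝ) → (Fin D → ℝ)) (ε : ℝ) : Prop where
  bijective : Function.Bijective Φ
  differentiable : Differentiable ℝ Φ
  lower : ∀ (x : Fin D → ℝ) (v : Fin D → ℝ),
    (1 - ε) * (∑ i, (v i) ^ 2) ≤ v ⬝ᵥ ((jacobian Φ x)ᵀ * jacobian Φ x).mulVec v
  upper : ∀ (x : Fin D → ℝ) (v : Fin D → ℝ),
    v ⬝ᵥ ((jacobian Φ x)ᵀ * jacobian Φ x).mulVec v ≤ (1 + ε) * (∑ i, (v i) ^ 2)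

noncomputable def pr (j : Fin 2) : (Fin 2 → ℝ) →L[ℝ] ℝ :=
  ContinuousLinearMap.proj j

noncomputable def Nf (x : Fin 2 → ℝ) : ℝ := Real.sqrt (x 0 ^ 2 + x 1 ^ 2)

/-- CLM associated to a 2×2 matrix. -/
noncomputable def toCLM (M : Matrix (Fin 2) (Fin 2) ℝ) : (Fin 2 → ℝ) →L[ℝ] (Fin 2 → ℝ) :=
  ContinuousLinearMap.pi (fun i => M i 0 • pr 0 + M i 1 • pr 1)

lemma toCLM_single (M : Matrix (Fin 2) (Fin 2) ℝ) (i j : Fin 2) :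
    toCLM M (Pi.single j 1) i = M i j := by
  fin_cases j <;>
    simp [toCLM, pr, Pi.single_apply]

/-- The candidate Jacobian matrix. -/
noncomputable def Jm (f : ℝ → ℝ) (x : Fin 2 → ℝ) : Matrix (Fin 2) (Fin 2) ℝ :=
  let r := Nf x
  let θ := f r
  let a := deriv f r / r
  !![Real.cos θ + (-Real.sin θ * x 0 + Real.cos θ * x 1) * (a * x 0),
     Real.sin θ + (-Real.sin θ * x 0 + Real.cos θ * x 1) * (a * x 1);
     -Real.sin θ + (-Real.cos θ * x 0 - Real.sin θ * x 1) * (a * x 0),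
     Real.cos θ + (-Real.cos θ * x 0 - Real.sin θ * x 1) * (a * x 1)]

/-- The concrete map. -/
noncomputable def Phi (f : ℝ → ℝ) (x : Fin 2 → ℝ) : Fin 2 → ℝ :=
  ![Real.cos (f (Nf x)) * x 0 + Real.sin (f (Nf x)) * x 1,
    -Real.sin (f (Nf x)) * x 0 + Real.cos (f (Nf x)) * x 1]

lemma hasFDerivN {x : Fin 2 → ℝ} (hx : x 0 ^ 2 + x 1 ^ 2 ≠ 0) :
    HasFDerivAt Nf ((x 0 / Nf x) • pr 0 + (x 1 / Nf x) • pr 1) x := by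
  have hpos : 0 < x 0 ^ 2 + x 1 ^ 2 := lt_of_le_of_ne (by positivity) (Ne.symm hx)
  have hr : Nf x ≠ 0 := (Real.sqrt_pos.mpr hpos).ne'
  have h0 : HasFDerivAt (fun y : Fin 2 → ℝ => y 0 ^ 2 + y 1 ^ 2)
      ((2 * x 0) • pr 0 + (2 * x 1) • pr 1) x := by
    have h00 := hasFDerivAt_apply (𝕜 := ℝ) (0 : Fin 2) x
    have h11 := hasFDerivAt_apply (𝕜 := ℝ) (1 : Fin 2) x
    have := (h00.mul h00).add (h11.mul h11)
    have heq : (fun y : Fin 2 → ℝ => y 0 ^ 2 + y 1 ^ 2)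
        = fun y : Fin 2 → ℝ => y 0 * y 0 + y 1 * y 1 := by
      funext y; ring
    rw [heq]
    refine this.congr_fderiv ?_
    ext v
    simp [pr]
    ring
  have hs := (Real.hasDerivAt_sqrt hx).comp_hasFDerivAt x h0
  refine hs.congr_fderiv ?_
  have hr' : Real.sqrt (x 0 ^ 2 + x 1 ^ 2) ≠ 0 := hr
  ext v
  simp [pr, Nf]
  field_simp

lemma hasFDerivPhi (f : ℝ → ℝ) (hf : ContDiff ℝ 1 f) {x : Fin 2 → ℝ}
    (hx : x 0 ^ 2 + x 1 ^ 2 ≠ 0) :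
    HasFDerivAt (Phi f) (toCLM (Jm f x)) x := by
  have hpos : 0 < x 0 ^ 2 + x 1 ^ 2 := lt_of_le_of_ne (by positivity) (Ne.symm hx)
  have hr : Nf x ≠ 0 := (Real.sqrt_pos.mpr hpos).ne'
  have hN := hasFDerivN hx
  have hf' : HasDerivAt f (deriv f (Nf x)) (Nf x) :=
    ((hf.differentiable one_ne_zero) (Nf x)).hasDerivAt
  have hθ := hf'.comp_hasFDerivAt x hN
  have hcos := (Real.hasDerivAt_cos (f (Nf x))).comp_hasFDerivAt x hθ
  have hsin := (Real.hasDerivAt_sin (f (Nf x))).comp_hasFDerivAt x hθ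
  have h0 := hasFDerivAt_apply (𝕜 := ℝ) (0 : Fin 2) x
  have h1 := hasFDerivAt_apply (𝕜 := ℝ) (1 : Fin 2) x
  have hc0 := (hcos.mul h0).add (hsin.mul h1)
  have hc1 := ((hsin.neg.mul h0)).add (hcos.mul h1)
  have hr' : Real.sqrt (x 0 ^ 2 + x 1 ^ 2) ≠ 0 := hr
  apply hasFDerivAt_pi''
  intro i
  fin_cases i
  · show HasFDerivAt (fun y : Fin 2 → ℝ => Phi f y 0)
      ((ContinuousLinearMap.proj 0).comp (toCLM (Jm f x))) x
    have hfun : (fun y : Fin 2 → ℝ => Phi f y 0)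
        = fun y => (Real.cos ∘ f ∘ Nf) y * y 0 + (Real.sin ∘ f ∘ Nf) y * y 1 := by
      funext y; simp [Phi]
    rw [hfun]
    refine hc0.congr_fderiv ?_
    ext v
    simp only [ContinuousLinearMap.coe_comp', Function.comp_apply, toCLM,
      ContinuousLinearMap.pi_apply, ContinuousLinearMap.add_apply,
      ContinuousLinearMap.coe_smul', Pi.smul_apply, pr, ContinuousLinearMap.proj_apply,
      smul_eq_mul, Jm, Nf, Matrix.cons_val', Matrix.cons_val_zero, Matrix.cons_val_one,
      Matrix.head_cons, Matrix.empty_val', Matrix.cons_val_fin_one, Matrix.head_fin_const,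
      ContinuousLinearMap.neg_apply, Matrix.of_apply]
    field_simp
    ring
  · show HasFDerivAt (fun y : Fin 2 → ℝ => Phi f y 1)
      ((ContinuousLinearMap.proj 1).comp (toCLM (Jm f x))) x
    have hfun : (fun y : Fin 2 → ℝ => Phi f y 1)
        = fun y => -(Real.sin ∘ f ∘ Nf) y * y 0 + (Real.cos ∘ f ∘ Nf) y * y 1 := by
      funext y; simp [Phi]
    rw [hfun]
    refine hc1.congr_fderiv ?_
    ext v
    simp only [ContinuousLinearMap.coe_comp', Function.comp_apply, toCLM,
      ContinuousLinearMap.pi_apply, ContinuousLinearMap.add_apply,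
      ContinuousLinearMap.coe_smul', Pi.smul_apply, pr, ContinuousLinearMap.proj_apply,
      smul_eq_mul, Jm, Nf, Matrix.cons_val', Matrix.cons_val_zero, Matrix.cons_val_one,
      Matrix.head_cons, Matrix.empty_val', Matrix.cons_val_fin_one, Matrix.head_fin_const,
      ContinuousLinearMap.neg_apply, Matrix.of_apply, Pi.neg_apply]
    field_simp
    ring

lemma abs_cos_sub_cos_le (p q : ℝ) : |Real.cos p - Real.cos q| ≤ |p - q| := by
  have h1 : |Real.sin ((p + q) / 2)| ≤ 1 := Real.abs_sin_le_one _
  have h2 : |Real.sin ((p - q) / 2)| ≤ |(p - q) / 2| := Real.abs_sin_le_abs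
  have h3 : |(p - q) / 2| = |p - q| / 2 := by rw [abs_div]; norm_num
  calc |Real.cos p - Real.cos q|
      = 2 * |Real.sin ((p + q) / 2)| * |Real.sin ((p - q) / 2)| := by
        rw [Real.cos_sub_cos, abs_mul, abs_mul, abs_neg]; norm_num
    _ ≤ |p - q| := by nlinarith [abs_nonneg (Real.sin ((p - q) / 2)), abs_nonneg (Real.sin ((p + q) / 2)), abs_nonneg (p - q)]

lemma abs_sin_sub_sin_le (p q : ℝ) : |Real.sin p - Real.sin q| ≤ |p - q| := by
  have h1 : |Real.cos ((p + q) / 2)| ≤ 1 := Real.abs_cos_le_one _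
  have h2 : |Real.sin ((p - q) / 2)| ≤ |(p - q) / 2| := Real.abs_sin_le_abs
  have h3 : |(p - q) / 2| = |p - q| / 2 := by rw [abs_div]; norm_num
  calc |Real.sin p - Real.sin q|
      = 2 * |Real.sin ((p - q) / 2)| * |Real.cos ((p + q) / 2)| := by
        rw [Real.sin_sub_sin, abs_mul, abs_mul]; norm_num
    _ ≤ |p - q| := by nlinarith [abs_nonneg (Real.sin ((p - q) / 2)), abs_nonneg (Real.cos ((p + q) / 2)), abs_nonneg (p - q)]

lemma Phi_zero (f : ℝ → ℝ) : Phi f 0 = 0 := by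
  funext i
  fin_cases i <;> simp [Phi]

lemma hasFDerivPhi0 (f : ℝ → ℝ) (hf : ContDiff ℝ 1 f) :
    HasFDerivAt (Phi f) (toCLM (Jm f 0)) (0 : Fin 2 → ℝ) := by
  rw [hasFDerivAt_iff_isLittleO_nhds_zero]
  rw [Asymptotics.isLittleO_iff]
  intro c hc
  have hNf : Continuous Nf := by
    unfold Nf; fun_prop
  have htend : Filter.Tendsto (fun y : Fin 2 → ℝ => f (Nf y)) (nhds 0) (nhds (f 0)) := by
    have : Nf (0 : Fin 2 → ℝ) = 0 := by simp [Nf]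
    have := ((hf.continuous.comp hNf).tendsto (0 : Fin 2 → ℝ))
    simpa [Nf, Function.comp_def] using this
  have hev : ∀ᶠ y : Fin 2 → ℝ in nhds 0, |f (Nf y) - f 0| < c / 2 := by
    have := Metric.tendsto_nhds.mp htend (c / 2) (by positivity)
    simpa [Real.dist_eq] using this
  filter_upwards [hev] with y hy
  simp only [zero_add, Phi_zero, sub_zero]
  have hb : ∀ i, ‖(Phi f y - toCLM (Jm f 0) y) i‖ ≤ c * ‖y‖ := by
    intro i
    have hy0 : |y 0| ≤ ‖y‖ := by
      simpa using norm_le_pi_norm y 0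
    have hy1 : |y 1| ≤ ‖y‖ := by
      simpa using norm_le_pi_norm y 1
    have hcosd : |Real.cos (f (Nf y)) - Real.cos (f 0)| ≤ c / 2 :=
      le_trans (abs_cos_sub_cos_le _ _) hy.le
    have hsind : |Real.sin (f (Nf y)) - Real.sin (f 0)| ≤ c / 2 :=
      le_trans (abs_sin_sub_sin_le _ _) hy.le
    fin_cases i
    · show ‖(Phi f y - toCLM (Jm f 0) y) 0‖ ≤ c * ‖y‖
      have : (Phi f y - toCLM (Jm f 0) y) 0
          = (Real.cos (f (Nf y)) - Real.cos (f 0)) * y 0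
            + (Real.sin (f (Nf y)) - Real.sin (f 0)) * y 1 := by
        simp [Phi, toCLM, Jm, pr, Nf]
        ring
      rw [this]
      have := abs_add_le ((Real.cos (f (Nf y)) - Real.cos (f 0)) * y 0)
        ((Real.sin (f (Nf y)) - Real.sin (f 0)) * y 1)
      rw [Real.norm_eq_abs]
      refine le_trans this ?_
      rw [abs_mul, abs_mul]
      have hn : (0:ℝ) ≤ ‖y‖ := norm_nonneg _
      nlinarith [abs_nonneg (y 0), abs_nonneg (y 1), abs_nonneg (Real.cos (f (Nf y)) - Real.cos (f 0)), abs_nonneg (Real.sin (f (Nf y)) - Real.sin (f 0))]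
    · show ‖(Phi f y - toCLM (Jm f 0) y) 1‖ ≤ c * ‖y‖
      have : (Phi f y - toCLM (Jm f 0) y) 1
          = -(Real.sin (f (Nf y)) - Real.sin (f 0)) * y 0
            + (Real.cos (f (Nf y)) - Real.cos (f 0)) * y 1 := by
        simp [Phi, toCLM, Jm, pr, Nf]
        ring
      rw [this]
      have := abs_add_le (-(Real.sin (f (Nf y)) - Real.sin (f 0)) * y 0)
        ((Real.cos (f (Nf y)) - Real.cos (f 0)) * y 1)
      rw [Real.norm_eq_abs]
      refine le_trans this ?_
      rw [abs_mul, abs_mul, abs_neg]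
      have hn : (0:ℝ) ≤ ‖y‖ := norm_nonneg _
      nlinarith [abs_nonneg (y 0), abs_nonneg (y 1), abs_nonneg (Real.cos (f (Nf y)) - Real.cos (f 0)), abs_nonneg (Real.sin (f (Nf y)) - Real.sin (f 0))]
  calc ‖Phi f y - toCLM (Jm f 0) y‖ ≤ c * ‖y‖ := by
        rw [pi_norm_le_iff_of_nonneg (by positivity)]
        exact hb
    _ = c * ‖y‖ := rfl

lemma hasFDerivPhiAll (f : ℝ → ℝ) (hf : ContDiff ℝ 1 f) (x : Fin 2 → ℝ) :
    HasFDerivAt (Phi f) (toCLM (Jm f x)) x := by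
  by_cases hx : x 0 ^ 2 + x 1 ^ 2 = 0
  · have h0 : x 0 = 0 := by
      have : x 0 ^ 2 = 0 := by nlinarith [sq_nonneg (x 0), sq_nonneg (x 1)]
      exact pow_eq_zero_iff (by norm_num) |>.mp this
    have h1 : x 1 = 0 := by
      have : x 1 ^ 2 = 0 := by nlinarith [sq_nonneg (x 0), sq_nonneg (x 1)]
      exact pow_eq_zero_iff (by norm_num) |>.mp this
    have hx0 : x = 0 := by
      funext i; fin_cases i
      · exact h0
      · exact h1
    rw [hx0]
    exact hasFDerivPhi0 f hf
  · exact hasFDerivPhi f hf hx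

lemma jacobian_Phi (f : ℝ → ℝ) (hf : ContDiff ℝ 1 f) (x : Fin 2 → ℝ) :
    (fun i j => fderiv ℝ (Phi f) x (Pi.single j 1) i : Matrix (Fin 2) (Fin 2) ℝ) = Jm f x := by
  funext i j
  rw [(hasFDerivPhiAll f hf x).fderiv]
  exact toCLM_single _ i j

lemma core_bound (ε a E W R2 V : ℝ) (hε : 0 < ε) (hε1 : ε < 1)
    (hEW : E ^ 2 + W ^ 2 = R2 * V) (hR2n : 0 ≤ R2) (hVn : 0 ≤ V)
    (ha : |a * R2| ≤ ε / 4) :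
    (1 - ε) * V ≤ V + 2 * a * E * W + a ^ 2 * E ^ 2 * R2
    ∧ V + 2 * a * E * W + a ^ 2 * E ^ 2 * R2 ≤ (1 + ε) * V := by
  have h2EW : 2 * |E| * |W| ≤ E ^ 2 + W ^ 2 := by
    nlinarith [sq_nonneg (|E| - |W|), sq_abs E, sq_abs W]
  have hA : |2 * a * E * W| ≤ (ε / 4) * V := by
    have e1 : |2 * a * E * W| = |a| * (2 * |E| * |W|) := by
      rw [abs_mul, abs_mul, abs_mul, abs_two]; ring
    have e2 : |a| * (2 * |E| * |W|) ≤ |a| * (E ^ 2 + W ^ 2) :=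
      mul_le_mul_of_nonneg_left h2EW (abs_nonneg a)
    have e3 : |a| * (E ^ 2 + W ^ 2) = |a * R2| * V := by
      rw [hEW, abs_mul, abs_of_nonneg hR2n]; ring
    have e4 : |a * R2| * V ≤ (ε / 4) * V := mul_le_mul_of_nonneg_right ha hVn
    rw [e1, ← e3] at *
    linarith
  have hAl := abs_le.mp hA
  have hB : a ^ 2 * E ^ 2 * R2 ≤ (ε / 4) * V := by
    have hE2 : E ^ 2 ≤ R2 * V := by nlinarith [sq_nonneg W]
    have haR : (0:ℝ) ≤ a ^ 2 * R2 := by positivity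
    have e1 : a ^ 2 * E ^ 2 * R2 ≤ a ^ 2 * (R2 * V) * R2 := by
      nlinarith [mul_le_mul_of_nonneg_left hE2 haR]
    have e2 : a ^ 2 * (R2 * V) * R2 = (a * R2) ^ 2 * V := by ring
    have e3 : (a * R2) ^ 2 ≤ (ε / 4) ^ 2 := by
      rw [← sq_abs (a * R2)]
      have h4 : (0:ℝ) ≤ ε / 4 := by positivity
      nlinarith [abs_nonneg (a * R2)]
    have e4 : (ε / 4) ^ 2 ≤ ε / 4 := by nlinarith
    nlinarith [mul_le_mul_of_nonneg_right e3 hVn, mul_le_mul_of_nonneg_right e4 hVn]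
  have hBn : 0 ≤ a ^ 2 * E ^ 2 * R2 := by positivity
  constructor
  · nlinarith
  · nlinarith

lemma quad_bound (ε c0 s0 a x0 x1 v0 v1 : ℝ) (hε : 0 < ε) (hε1 : ε < 1)
    (htrig : c0 ^ 2 + s0 ^ 2 = 1) (ha : |a * (x0 ^ 2 + x1 ^ 2)| ≤ ε / 4) :
    (1 - ε) * (v0 ^ 2 + v1 ^ 2) ≤
      ((c0 + (-s0 * x0 + c0 * x1) * (a * x0)) * v0 + (s0 + (-s0 * x0 + c0 * x1) * (a * x1)) * v1) ^ 2
      + ((-s0 + (-c0 * x0 - s0 * x1) * (a * x0)) * v0 + (c0 + (-c0 * x0 - s0 * x1) * (a * x1)) * v1) ^ 2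
    ∧ ((c0 + (-s0 * x0 + c0 * x1) * (a * x0)) * v0 + (s0 + (-s0 * x0 + c0 * x1) * (a * x1)) * v1) ^ 2
      + ((-s0 + (-c0 * x0 - s0 * x1) * (a * x0)) * v0 + (c0 + (-c0 * x0 - s0 * x1) * (a * x1)) * v1) ^ 2
      ≤ (1 + ε) * (v0 ^ 2 + v1 ^ 2) := by
  have hQ : ((c0 + (-s0 * x0 + c0 * x1) * (a * x0)) * v0 + (s0 + (-s0 * x0 + c0 * x1) * (a * x1)) * v1) ^ 2
      + ((-s0 + (-c0 * x0 - s0 * x1) * (a * x0)) * v0 + (c0 + (-c0 * x0 - s0 * x1) * (a * x1)) * v1) ^ 2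
      = (v0 ^ 2 + v1 ^ 2) + 2 * a * (x0 * v0 + x1 * v1) * (x1 * v0 - x0 * v1)
        + a ^ 2 * (x0 * v0 + x1 * v1) ^ 2 * (x0 ^ 2 + x1 ^ 2) := by
    linear_combination (v0 ^ 2 + v1 ^ 2 + 2 * a * (x0 * v0 + x1 * v1) * (x1 * v0 - x0 * v1)
      + a ^ 2 * (x0 * v0 + x1 * v1) ^ 2 * (x0 ^ 2 + x1 ^ 2)) * htrig
  rw [hQ]
  exact core_bound ε a (x0 * v0 + x1 * v1) (x1 * v0 - x0 * v1) (x0 ^ 2 + x1 ^ 2)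
    (v0 ^ 2 + v1 ^ 2) hε hε1 (by ring) (by positivity) (by positivity) ha

/-- The inverse map (rotation by the opposite angle). -/
noncomputable def Psi (f : ℝ → ℝ) (y : Fin 2 → ℝ) : Fin 2 → ℝ :=
  ![Real.cos (f (Nf y)) * y 0 - Real.sin (f (Nf y)) * y 1,
    Real.sin (f (Nf y)) * y 0 + Real.cos (f (Nf y)) * y 1]

lemma Phi_sq (f : ℝ → ℝ) (x : Fin 2 → ℝ) :
    (Phi f x) 0 ^ 2 + (Phi f x) 1 ^ 2 = x 0 ^ 2 + x 1 ^ 2 := by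
  simp only [Phi, Matrix.cons_val_zero, Matrix.cons_val_one, Matrix.head_cons]
  linear_combination (x 0 ^ 2 + x 1 ^ 2) * Real.sin_sq_add_cos_sq (f (Nf x))

lemma Psi_sq (f : ℝ → ℝ) (x : Fin 2 → ℝ) :
    (Psi f x) 0 ^ 2 + (Psi f x) 1 ^ 2 = x 0 ^ 2 + x 1 ^ 2 := by
  simp only [Psi, Matrix.cons_val_zero, Matrix.cons_val_one, Matrix.head_cons]
  linear_combination (x 0 ^ 2 + x 1 ^ 2) * Real.sin_sq_add_cos_sq (f (Nf x))

lemma Nf_Phi (f : ℝ → ℝ) (x : Fin 2 → ℝ) : Nf (Phi f x) = Nf x :=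
  congrArg Real.sqrt (Phi_sq f x)

lemma Nf_Psi (f : ℝ → ℝ) (x : Fin 2 → ℝ) : Nf (Psi f x) = Nf x :=
  congrArg Real.sqrt (Psi_sq f x)

lemma Psi_Phi (f : ℝ → ℝ) (x : Fin 2 → ℝ) : Psi f (Phi f x) = x := by
  funext i
  fin_cases i
  · show Psi f (Phi f x) 0 = x 0
    simp only [Psi, Matrix.cons_val_zero, Matrix.cons_val_one, Matrix.head_cons]
    rw [Nf_Phi]
    simp only [Phi, Matrix.cons_val_zero, Matrix.cons_val_one, Matrix.head_cons]
    linear_combination (x 0) * Real.sin_sq_add_cos_sq (f (Nf x))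
  · show Psi f (Phi f x) 1 = x 1
    simp only [Psi, Matrix.cons_val_zero, Matrix.cons_val_one, Matrix.head_cons]
    rw [Nf_Phi]
    simp only [Phi, Matrix.cons_val_zero, Matrix.cons_val_one, Matrix.head_cons]
    linear_combination (x 1) * Real.sin_sq_add_cos_sq (f (Nf x))

lemma Phi_Psi (f : ℝ → ℝ) (x : Fin 2 → ℝ) : Phi f (Psi f x) = x := by
  funext i
  fin_cases i
  · show Phi f (Psi f x) 0 = x 0
    simp only [Phi, Matrix.cons_val_zero, Matrix.cons_val_one, Matrix.head_cons]
    rw [Nf_Psi]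
    simp only [Psi, Matrix.cons_val_zero, Matrix.cons_val_one, Matrix.head_cons]
    linear_combination (x 0) * Real.sin_sq_add_cos_sq (f (Nf x))
  · show Phi f (Psi f x) 1 = x 1
    simp only [Phi, Matrix.cons_val_zero, Matrix.cons_val_one, Matrix.head_cons]
    rw [Nf_Psi]
    simp only [Psi, Matrix.cons_val_zero, Matrix.cons_val_one, Matrix.head_cons]
    linear_combination (x 1) * Real.sin_sq_add_cos_sq (f (Nf x))

lemma Phi_bijective (f : ℝ → ℝ) : Function.Bijective (Phi f) :=
  Function.bijective_iff_has_inverse.mpr ⟨Psi f, Psi_Phi f, Phi_Psi f⟩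

lemma dot_transpose (M : Matrix (Fin 2) (Fin 2) ℝ) (v : Fin 2 → ℝ) :
    v ⬝ᵥ (Mᵀ * M).mulVec v
      = (M 0 0 * v 0 + M 0 1 * v 1) ^ 2 + (M 1 0 * v 0 + M 1 1 * v 1) ^ 2 := by
  simp [Matrix.mulVec, Matrix.mul_apply, dotProduct, Fin.sum_univ_two, Matrix.transpose_apply]
  ring

lemma key_small (f : ℝ → ℝ) (ε : ℝ) (hε : 0 < ε)
    (hsmall : ∀ t : ℝ, 0 ≤ t → t * |deriv f t| ≤ (1/4) * ε) (x : Fin 2 → ℝ) :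
    |deriv f (Nf x) / Nf x * (x 0 ^ 2 + x 1 ^ 2)| ≤ ε / 4 := by
  by_cases hx : x 0 ^ 2 + x 1 ^ 2 = 0
  · rw [hx]
    simp
    positivity
  · have hpos : 0 < x 0 ^ 2 + x 1 ^ 2 := lt_of_le_of_ne (by positivity) (Ne.symm hx)
    have hrpos : 0 < Nf x := Real.sqrt_pos.mpr hpos
    have hsq : Nf x ^ 2 = x 0 ^ 2 + x 1 ^ 2 := Real.sq_sqrt hpos.le
    have heq : deriv f (Nf x) / Nf x * (x 0 ^ 2 + x 1 ^ 2) = deriv f (Nf x) * Nf x := by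
      rw [← hsq]; field_simp
    rw [heq, abs_mul, abs_of_pos hrpos]
    have := hsmall (Nf x) hrpos.le
    linarith [this, mul_comm (Nf x) |deriv f (Nf x)|]

theorem stmt15 :
    ∃ c : ℝ, 0 < c ∧ ∀ (f : ℝ → ℝ) (ε : ℝ), 0 < ε → ε < 1 →
      ContDiff ℝ 1 f → (∀ t : ℝ, 0 ≤ t → t * |deriv f t| ≤ c * ε) →
      ∀ Φ : (Fin 2 → ℝ) → (Fin 2 → ℝ),
        (∀ x : Fin 2 → ℝ,
          Φ x = ![Real.cos (f (Real.sqrt ((x 0) ^ 2 + (x 1) ^ 2))) * x 0 +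
                    Real.sin (f (Real.sqrt ((x 0) ^ 2 + (x 1) ^ 2))) * x 1,
                  -Real.sin (f (Real.sqrt ((x 0) ^ 2 + (x 1) ^ 2))) * x 0 +
                    Real.cos (f (Real.sqrt ((x 0) ^ 2 + (x 1) ^ 2))) * x 1]) →
        EpsDistorted Φ ε := by
  refine ⟨1/4, by norm_num, ?_⟩
  intro f ε hε hε1 hf hsmall Φ hΦ
  have hPhi : Φ = Phi f := by
    funext x
    rw [hΦ]
    rfl
  subst hPhi
  have hjac : ∀ x, jacobian (Phi f) x = Jm f x := fun x => jacobian_Phi f hf x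
  have hkey : ∀ x : Fin 2 → ℝ,
      |deriv f (Nf x) / Nf x * (x 0 ^ 2 + x 1 ^ 2)| ≤ ε / 4 :=
    key_small f ε hε hsmall
  refine ⟨Phi_bijective f, fun x => (hasFDerivPhiAll f hf x).differentiableAt, ?_, ?_⟩
  · intro x v
    rw [hjac, dot_transpose, Fin.sum_univ_two]
    have := (quad_bound ε (Real.cos (f (Nf x))) (Real.sin (f (Nf x)))
      (deriv f (Nf x) / Nf x) (x 0) (x 1) (v 0) (v 1) hε hε1
      (Real.cos_sq_add_sin_sq _) (hkey x)).1
    simpa only [Jm, Matrix.cons_val', Matrix.cons_val_zero, Matrix.cons_val_one,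
      Matrix.head_cons, Matrix.empty_val', Matrix.cons_val_fin_one,
      Matrix.head_fin_const, Matrix.of_apply] using this
  · intro x v
    rw [hjac, dot_transpose, Fin.sum_univ_two]
    have := (quad_bound ε (Real.cos (f (Nf x))) (Real.sin (f (Nf x)))
      (deriv f (Nf x) / Nf x) (x 0) (x 1) (v 0) (v 1) hε hε1
      (Real.cos_sq_add_sin_sq _) (hkey x)).2
    simpa only [Jm, Matrix.cons_val', Matrix.cons_val_zero, Matrix.cons_val_one,
      Matrix.head_cons, Matrix.empty_val', Matrix.cons_val_fin_one,
      Matrix.head_fin_const, Matrix.of_apply] using this
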